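/- Theorem 2 for the two-qubit Jaynes–Cummings model ('after' values, unnormalized): let U = exp(−iθ(σ⁺⊗σ⁻ + σ⁻⊗σ⁺)) on ℂ²⊗ℂ², let O_S and P^x be diagonal in the computational basis (i.e., diagonal 2×2 matrices, P^x a projection), and let ρ⊗ϱ have a real symmetric matrix in the computational product basis (ρ, ϱ real symmetric density matrices). Then tr[(O_S ⊗ P^x) U(ρ⊗ϱ)U†] = tr[(O_S ⊗ P^x) U(Φ_N(ρ)⊗ϱ)U†], where Φ_N(ρ) is the diagonal part of ρ in the computational basis. -/

import Mathlib

open Matrix BigOperators Kronecker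
open scoped ComplexOrder

/-- Theorem 2 for the two-qubit Jaynes–Cummings model, 'after'
values, unnormalized: with U = exp(−iθ(σ⁺⊗σ⁻+σ⁻⊗σ⁺)), O_S and Pˣ diagonal
(Pˣ a projection), and ρ, ϱ density matrices with all entries real (hence
symmetric), tr[(O_S⊗Pˣ)U(ρ⊗ϱ)U†] = tr[(O_S⊗Pˣ)U(Φ_N(ρ)⊗ϱ)U†], where Φ_N(ρ)
is the diagonal part of ρ. -/
theorem thm2_two_qubit_jaynes_cummings (θ : ℝ)
    (σp σm : Matrix (Fin 2) (Fin 2) ℂ)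
    (hσp : σp = Matrix.single 1 0 1)
    (hσm : σm = Matrix.single 0 1 1)
    (U : Matrix (Fin 2 × Fin 2) (Fin 2 × Fin 2) ℂ)
    (hU : U = NormedSpace.exp ((-(Complex.I * (θ : ℂ))) • (σp ⊗ₖ σm + σm ⊗ₖ σp)))
    (OS : Matrix (Fin 2) (Fin 2) ℂ) (hOSherm : OS.IsHermitian)
    (hOSdiag : ∀ i j, i ≠ j → OS i j = 0)
    (P : Matrix (Fin 2) (Fin 2) ℂ) (hPproj : P * P = P) (hPherm : P.IsHermitian)
    (hPdiag : ∀ i j, i ≠ j → P i j = 0)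
    (ρ : Matrix (Fin 2) (Fin 2) ℂ) (hρ : ρ.PosSemidef) (hρtr : ρ.trace = 1)
    (hρreal : ∀ i j, (ρ i j).im = 0)
    (ϱ : Matrix (Fin 2) (Fin 2) ℂ) (hϱ : ϱ.PosSemidef) (hϱtr : ϱ.trace = 1)
    (hϱreal : ∀ i j, (ϱ i j).im = 0) :
    ((OS ⊗ₖ P) * (U * (ρ ⊗ₖ ϱ) * Uᴴ)).trace
      = ((OS ⊗ₖ P) * (U * ((Matrix.diagonal fun i => ρ i i) ⊗ₖ ϱ) * Uᴴ)).trace := by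
  set Z : Matrix (Fin 2) (Fin 2) ℂ := Matrix.diagonal ![1,-1] with hZ
  set M : Matrix (Fin 2 × Fin 2) (Fin 2 × Fin 2) ℂ := σp ⊗ₖ σm + σm ⊗ₖ σp with hM
  set W : Matrix (Fin 2 × Fin 2) (Fin 2 × Fin 2) ℂ := Z ⊗ₖ (1 : Matrix (Fin 2) (Fin 2) ℂ) with hW
  -- basic facts about Z
  have hZZ : Z * Z = 1 := by
    rw [hZ, Matrix.diagonal_mul_diagonal]
    ext i j
    fin_cases i <;> fin_cases j <;> simp
  have hZsp : Z * σp * Z = -σp := by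
    subst hσp; ext i j
    simp only [hZ, Matrix.diagonal_mul, Matrix.mul_diagonal, Matrix.single,
      Matrix.neg_apply, Matrix.of_apply]
    fin_cases i <;> fin_cases j <;> simp
  have hZsm : Z * σm * Z = -σm := by
    subst hσm; ext i j
    simp only [hZ, Matrix.diagonal_mul, Matrix.mul_diagonal, Matrix.single,
      Matrix.neg_apply, Matrix.of_apply]
    fin_cases i <;> fin_cases j <;> simp
  have hZOS : Z * OS * Z = OS := by
    ext i j
    simp only [hZ, Matrix.diagonal_mul, Matrix.mul_diagonal]
    by_cases h : i = j
    · subst h; fin_cases i <;> simp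
    · rw [hOSdiag i j h]; ring
  have hZdiagρ : (Matrix.diagonal fun i => ρ i i) = (2⁻¹ : ℂ) • (ρ + Z * ρ * Z) := by
    ext i j
    simp only [hZ, Matrix.diagonal_mul, Matrix.mul_diagonal, Matrix.smul_apply,
      Matrix.add_apply, Matrix.diagonal_apply]
    by_cases h : i = j
    · subst h; fin_cases i <;> simp <;> ring
    · simp only [if_neg h]
      fin_cases i <;> fin_cases j <;> simp_all <;> ring
  -- W facts
  have hWW : W * W = 1 := by
    rw [hW, ← Matrix.mul_kronecker_mul, hZZ, one_mul, Matrix.one_kronecker_one]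
  have hWunit : IsUnit W := (Matrix.isUnit_iff_isUnit_det W).mpr (Matrix.isUnit_det_of_right_inverse hWW)
  have hWinv : W⁻¹ = W := Matrix.inv_eq_right_inv hWW
  have hWMW : W * M * W = -M := by
    rw [hM, hW]
    rw [Matrix.mul_add, Matrix.add_mul, ← Matrix.mul_kronecker_mul, ← Matrix.mul_kronecker_mul,
      ← Matrix.mul_kronecker_mul, ← Matrix.mul_kronecker_mul, hZsp, hZsm, one_mul, mul_one,
      one_mul, mul_one]
    ext i j
    simp [Matrix.kroneckerMap_apply]
    ring
  -- M is Hermitian and symmetric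
  have hspT : σpᵀ = σm := by
    subst hσp hσm; ext i j
    simp [Matrix.single, Matrix.transpose_apply, and_comm]
  have hspH : σpᴴ = σm := by
    subst hσp hσm; ext i j
    simp [Matrix.single, Matrix.conjTranspose_apply, and_comm]
  have hsmT : σmᵀ = σp := by
    rw [← hspT, Matrix.transpose_transpose]
  have hsmH : σmᴴ = σp := by
    rw [← hspH, Matrix.conjTranspose_conjTranspose]
  have hkT : ∀ (A B : Matrix (Fin 2) (Fin 2) ℂ), (A ⊗ₖ B)ᵀ = Aᵀ ⊗ₖ Bᵀ := by
    intro A B; ext ⟨i,k⟩ ⟨j,l⟩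
    simp [Matrix.kroneckerMap_apply, Matrix.transpose_apply]
  have hkH : ∀ (A B : Matrix (Fin 2) (Fin 2) ℂ), (A ⊗ₖ B)ᴴ = Aᴴ ⊗ₖ Bᴴ := by
    intro A B; ext ⟨i,k⟩ ⟨j,l⟩
    simp [Matrix.kroneckerMap_apply, Matrix.conjTranspose_apply]
  have hMT : Mᵀ = M := by
    rw [hM, Matrix.transpose_add, hkT, hkT, hspT, hsmT, add_comm]
  have hMH : Mᴴ = M := by
    rw [hM, Matrix.conjTranspose_add, hkH, hkH, hspH, hsmH, add_comm]
  -- U facts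
  have hUT : Uᵀ = U := by
    rw [hU, ← Matrix.exp_transpose, Matrix.transpose_smul, hMT]
  have hUH : Uᴴ = NormedSpace.exp ((Complex.I * (θ : ℂ)) • M) := by
    rw [hU, ← Matrix.exp_conjTranspose]
    congr 1
    rw [Matrix.conjTranspose_smul, hMH]
    congr 1
    simp
  have hWUW : W * U * W = Uᴴ := by
    rw [hUH, hU]
    have : W * ((-(Complex.I * (θ : ℂ))) • M) * W⁻¹ = (Complex.I * (θ : ℂ)) • M := by
      rw [hWinv, Matrix.mul_smul, Matrix.smul_mul, hWMW]
      simp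
    rw [← this, Matrix.exp_conj W ((-(Complex.I * (θ : ℂ))) • M) hWunit, hWinv]
  have hUW : U * W = W * Uᴴ := by
    have h1 : W * (W * U * W) = W * Uᴴ := by rw [hWUW]
    rw [← Matrix.mul_assoc, ← Matrix.mul_assoc, hWW, Matrix.one_mul] at h1
    exact h1
  have hWU : W * U = Uᴴ * W := by
    have h1 : (W * U * W) * W = Uᴴ * W := by rw [hWUW]
    rw [Matrix.mul_assoc, hWW, Matrix.mul_one] at h1
    exact h1
  -- (Uᴴ)ᵀ = Uᴴ
  have hUHT : (Uᴴ)ᵀ = Uᴴ := by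
    ext i j
    simp only [Matrix.transpose_apply, Matrix.conjTranspose_apply]
    rw [show U j i = Uᵀ i j from rfl, hUT]
  -- OS, P symmetric transposes; ρ, ϱ symmetric
  have hsymm : ∀ (A : Matrix (Fin 2) (Fin 2) ℂ), A.IsHermitian → (∀ i j, (A i j).im = 0) →
      Aᵀ = A := by
    intro A hA hAr
    ext i j
    have h1 : star (A j i) = A i j := congrFun (congrFun hA i) j
    rw [Matrix.transpose_apply, ← h1]
    exact (Complex.conj_eq_iff_im.mpr (hAr j i)).symm
  have hOST : OSᵀ = OS := hsymm OS hOSherm (fun i j => by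
    by_cases h : i = j
    · subst h
      have := hOSherm.coe_re_apply_self i
      simpa [Complex.ext_iff] using congrArg Complex.im this.symm
    · simp [hOSdiag i j h])
  have hPT : Pᵀ = P := by
    ext i j
    by_cases h : i = j
    · subst h; rfl
    · rw [Matrix.transpose_apply, hPdiag i j h, hPdiag j i (Ne.symm h)]
  have hρT : ρᵀ = ρ := hsymm ρ hρ.1 hρreal
  have hϱT : ϱᵀ = ϱ := hsymm ϱ hϱ.1 hϱreal
  have hXT : (ρ ⊗ₖ ϱ)ᵀ = ρ ⊗ₖ ϱ := by rw [hkT, hρT, hϱT]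
  have hOPT : (OS ⊗ₖ P)ᵀ = OS ⊗ₖ P := by rw [hkT, hOST, hPT]
  have hWOP : W * (OS ⊗ₖ P) * W = OS ⊗ₖ P := by
    rw [hW, ← Matrix.mul_kronecker_mul, ← Matrix.mul_kronecker_mul, hZOS, one_mul, mul_one]
  -- main invariance
  have key : ((OS ⊗ₖ P) * (U * (W * (ρ ⊗ₖ ϱ) * W) * Uᴴ)).trace
      = ((OS ⊗ₖ P) * (U * (ρ ⊗ₖ ϱ) * Uᴴ)).trace := by
    set X := ρ ⊗ₖ ϱ with hX
    have e1 : U * (W * X * W) * Uᴴ = W * (Uᴴ * X * U) * W := by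
      calc U * (W * X * W) * Uᴴ = (U * W) * X * (W * Uᴴ) := by
            simp only [Matrix.mul_assoc]
        _ = (W * Uᴴ) * X * (U * W) := by rw [hUW]
        _ = W * (Uᴴ * X * U) * W := by simp only [Matrix.mul_assoc]
    rw [e1]
    have e2 : ((OS ⊗ₖ P) * (W * (Uᴴ * X * U) * W)).trace
        = ((OS ⊗ₖ P) * (Uᴴ * X * U)).trace := by
      calc ((OS ⊗ₖ P) * (W * (Uᴴ * X * U) * W)).trace
          = (((OS ⊗ₖ P) * W * (Uᴴ * X * U)) * W).trace := by
            simp only [Matrix.mul_assoc]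
        _ = (W * ((OS ⊗ₖ P) * W * (Uᴴ * X * U))).trace :=
            Matrix.trace_mul_comm _ _
        _ = ((W * (OS ⊗ₖ P) * W) * (Uᴴ * X * U)).trace := by
            simp only [Matrix.mul_assoc]
        _ = ((OS ⊗ₖ P) * (Uᴴ * X * U)).trace := by rw [hWOP]
    rw [e2]
    -- transpose trick
    rw [← Matrix.trace_transpose ((OS ⊗ₖ P) * (Uᴴ * X * U))]
    have e3 : ((OS ⊗ₖ P) * (Uᴴ * X * U))ᵀ = (Uᵀ * (Xᵀ * ((Uᴴ)ᵀ * (OS ⊗ₖ P)ᵀ))) := by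
      simp only [Matrix.transpose_mul, Matrix.mul_assoc]
    rw [e3, hUT, hXT, hUHT, hOPT]
    rw [show U * (X * (Uᴴ * (OS ⊗ₖ P))) = (U * X * Uᴴ) * (OS ⊗ₖ P) by
      simp only [Matrix.mul_assoc], Matrix.trace_mul_comm, Matrix.mul_assoc]
  -- conclude by linearity
  have hWXW : W * (ρ ⊗ₖ ϱ) * W = (Z * ρ * Z) ⊗ₖ ϱ := by
    rw [hW, ← Matrix.mul_kronecker_mul, ← Matrix.mul_kronecker_mul, one_mul, mul_one]
  rw [hZdiagρ]
  have hlin : ((2⁻¹ : ℂ) • (ρ + Z * ρ * Z)) ⊗ₖ ϱ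
      = (2⁻¹ : ℂ) • ((ρ ⊗ₖ ϱ) + (Z * ρ * Z) ⊗ₖ ϱ) := by
    rw [Matrix.smul_kronecker, Matrix.add_kronecker]
  rw [hlin, ← hWXW]
  have expand : U * ((2⁻¹ : ℂ) • ((ρ ⊗ₖ ϱ) + W * (ρ ⊗ₖ ϱ) * W)) * Uᴴ
      = (2⁻¹ : ℂ) • (U * (ρ ⊗ₖ ϱ) * Uᴴ + U * (W * (ρ ⊗ₖ ϱ) * W) * Uᴴ) := by
    rw [Matrix.mul_smul, Matrix.smul_mul, Matrix.mul_add, Matrix.add_mul]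
  rw [expand, Matrix.mul_smul, Matrix.trace_smul, Matrix.mul_add, Matrix.trace_add, key]
  rw [smul_eq_mul]
  ring
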